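/- Let V be a real topological vector space, let q : V → ℝ be a continuous weak Minkowski norm, and let P := { p ∈ V' | ⟨p,x⟩ ≤ q(x) for all x ∈ V } be the set of continuous linear forms dominated by q. Denote by ext P the set of extreme points of P and by cl(ext P) its closure with respect to the weak* topology. Then for every x ∈ V, q(x) = sup_{p ∈ ext P} ⟨p,x⟩ = max_{p ∈ cl(ext P)} ⟨p,x⟩, the latter supremum being attained. In particular, if ext P is weak* closed then the supremum of ⟨p,x⟩ over P is attained at an extreme point of P. -/

import Mathlib

open Set


/-- With `P` the set of continuous linear forms dominated by a continuous weak
Minkowski norm `q`, for every `x` we have `q x = sup_{p ∈ ext P} p x = max_{p ∈ cl(ext P)} p x`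
(the latter attained), where `ext P` is the set of extreme points of `P` and the closure is
taken in the weak* topology. Moreover, if `ext P` is weak* closed, then the supremum of `p x`
over `P` is attained at an extreme point of `P`. -/
theorem stmt2 {V : Type*} [AddCommGroup V] [Module ℝ V] [TopologicalSpace V]
    [IsTopologicalAddGroup V] [ContinuousSMul ℝ V]
    (q : V → ℝ) (hq_convex : ConvexOn ℝ Set.univ q)
    (hq_hom : ∀ (c : ℝ), 0 ≤ c → ∀ x : V, q (c • x) = c * q x)
    (hq_cont : Continuous q)
    (P : Set (WeakDual ℝ V)) (hP : P = {p : WeakDual ℝ V | ∀ x : V, p x ≤ q x}) :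
    (∀ x : V, IsLUB {r : ℝ | ∃ p ∈ Set.extremePoints ℝ P, r = p x} (q x)) ∧
    (∀ x : V, IsGreatest {r : ℝ | ∃ p ∈ closure (Set.extremePoints ℝ P), r = p x} (q x)) ∧
    (IsClosed (Set.extremePoints ℝ P) →
      ∀ x : V, ∃ p ∈ Set.extremePoints ℝ P,
        IsGreatest {r : ℝ | ∃ p' ∈ P, r = p' x} (p x)) := by
  subst hP
  haveI : LocallyConvexSpace ℝ (WeakDual ℝ V) := WeakBilin.locallyConvexSpace
  -- basic facts about q
  have hq0 : q 0 = 0 := by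
    have := hq_hom 0 le_rfl 0
    simpa using this
  have hq_add : ∀ x y : V, q (x + y) ≤ q x + q y := by
    intro x y
    have h2 : q ((1/2 : ℝ) • x + (1/2 : ℝ) • y) ≤ (1/2) * q x + (1/2) * q y := by
      have := hq_convex.2 (mem_univ x) (mem_univ y) (by norm_num : (0:ℝ) ≤ 1/2)
        (by norm_num : (0:ℝ) ≤ 1/2) (by norm_num)
      simpa [smul_eq_mul] using this
    have h3 : q ((2:ℝ) • ((1/2 : ℝ) • x + (1/2 : ℝ) • y)) =
        2 * q ((1/2 : ℝ) • x + (1/2 : ℝ) • y) := hq_hom 2 (by norm_num) _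
    have h4 : (2:ℝ) • ((1/2 : ℝ) • x + (1/2 : ℝ) • y) = x + y := by
      rw [smul_add, smul_smul, smul_smul]; norm_num
    rw [h4] at h3
    linarith
  have hq_neg : ∀ c : ℝ, c < 0 → ∀ x : V, c * q x ≤ q (c • x) := by
    intro c hc x
    have h1 : q ((-c) • x) = (-c) * q x := hq_hom (-c) (by linarith) x
    have h2 : q (c • x) + q ((-c) • x) ≥ q 0 := by
      have := hq_add (c • x) ((-c) • x)
      have h3 : c • x + (-c) • x = 0 := by rw [← add_smul]; simp
      rw [h3] at this; linarith
    rw [hq0] at h2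
    rw [h1] at h2
    linarith
  -- continuity of dominated linear maps
  have hcont : ∀ g : V →ₗ[ℝ] ℝ, (∀ y, g y ≤ q y) → Continuous g := by
    intro g hg
    refine continuous_of_continuousAt_zero g ?_
    rw [ContinuousAt, map_zero, Metric.tendsto_nhds]
    intro ε hε
    have hU : {y : V | q y < ε} ∈ nhds (0 : V) :=
      (isOpen_lt hq_cont continuous_const).mem_nhds (by simpa [hq0] using hε)
    have hU' : {y : V | q (-y) < ε} ∈ nhds (0 : V) :=
      (isOpen_lt (hq_cont.comp continuous_neg) continuous_const).mem_nhds
        (by simpa [hq0] using hε)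
    filter_upwards [hU, hU'] with y h1 h2
    have hy1 : g y ≤ q y := hg y
    have hy2 : g (-y) ≤ q (-y) := hg (-y)
    rw [map_neg] at hy2
    rw [Real.dist_0_eq_abs, abs_lt]
    constructor <;> [linarith; linarith]
  -- attainment
  have hatt : ∀ x : V, ∃ p : WeakDual ℝ V, (∀ y, p y ≤ q y) ∧ p x = q x := by
    have key : ∀ x : V, x ≠ 0 → ∃ p : WeakDual ℝ V, (∀ y, p y ≤ q y) ∧ p x = q x := by
      intro x hx
      set f : V →ₗ.[ℝ] ℝ := LinearPMap.mkSpanSingleton x (q x) hx with hf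
      have hdom : ∀ y : f.domain, f y ≤ q y := by
        rintro ⟨y, hy⟩
        have hy' : y ∈ Submodule.span ℝ ({x} : Set V) := hy
        rw [Submodule.mem_span_singleton] at hy'
        obtain ⟨c, rfl⟩ := hy'
        have happ : f ⟨c • x, hy⟩ = c • q x := LinearPMap.mkSpanSingleton'_apply _ _ _ _ _
        rw [happ, smul_eq_mul]
        rcases le_or_gt 0 c with hc | hc
        · rw [hq_hom c hc]
        · exact hq_neg c hc x
      obtain ⟨g, hg1, hg2⟩ := exists_extension_of_le_sublinear f q
        (fun c hc y => hq_hom c hc.le y) hq_add hdom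
      have hgx : g x = q x := by
        have := hg1 ⟨x, Submodule.mem_span_singleton_self x⟩
        rw [this, LinearPMap.mkSpanSingleton_apply]
      exact ⟨⟨g, hcont g hg2⟩, hg2, hgx⟩
    intro x
    rcases eq_or_ne x 0 with rfl | hx
    · by_cases hall : ∀ z : V, z = 0
      · refine ⟨0, fun y => ?_, by simp [hq0]⟩
        rw [hall y, hq0]; simp
      · push_neg at hall
        obtain ⟨z, hz⟩ := hall
        obtain ⟨p, hp, _⟩ := key z hz
        exact ⟨p, hp, by simp [hq0]⟩
    · exact key x hx
  set P : Set (WeakDual ℝ V) := {p : WeakDual ℝ V | ∀ x : V, p x ≤ q x} with hPdef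
  -- P is closed
  have hPcl : IsClosed P := by
    have : P = ⋂ x, {p : WeakDual ℝ V | p x ≤ q x} := by ext p; simp [hPdef]
    rw [this]
    exact isClosed_iInter fun x => isClosed_le (WeakDual.eval_continuous x) continuous_const
  -- P is compact
  have hPcomp : IsCompact P := by
    set K : Set (V → ℝ) := {f | (∀ x y, f (x + y) = f x + f y) ∧
      (∀ (c : ℝ) x, f (c • x) = c * f x) ∧ ∀ x, f x ≤ q x} with hKdef
    have hKcl : IsClosed K := by
      have : K = (⋂ x, ⋂ y, {f : V → ℝ | f (x + y) = f x + f y}) ∩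
          ((⋂ (c : ℝ), ⋂ x, {f : V → ℝ | f (c • x) = c * f x}) ∩
           (⋂ x, {f : V → ℝ | f x ≤ q x})) := by
        ext f; simp [hKdef, forall_and]
      rw [this]
      refine ((isClosed_iInter fun x => isClosed_iInter fun y => ?_).inter
        ((isClosed_iInter fun c => isClosed_iInter fun x => ?_).inter
         (isClosed_iInter fun x => ?_)))
      · exact isClosed_eq (continuous_apply (x + y)) ((continuous_apply x).add (continuous_apply y))
      · exact isClosed_eq (continuous_apply (c • x)) (continuous_const.mul (continuous_apply x))
      · exact isClosed_le (continuous_apply _) continuous_const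
    have hKsub : K ⊆ Set.pi univ fun x => Icc (-(q (-x))) (q x) := by
      rintro f ⟨h1, h2, h3⟩ x _
      refine ⟨?_, h3 x⟩
      have : f (-x) = -f x := by
        have := h2 (-1) x
        simpa using this
      have h4 := h3 (-x)
      rw [this] at h4
      linarith
    have hKcomp : IsCompact K :=
      (isCompact_univ_pi fun x => isCompact_Icc).of_isClosed_subset hKcl hKsub
    have himg : (DFunLike.coe '' P : Set (V → ℝ)) = K := by
      apply Subset.antisymm
      · rintro _ ⟨p, hp, rfl⟩
        exact ⟨fun x y => map_add p x y, fun c x => by rw [map_smul]; rfl, hp⟩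
      · rintro f ⟨h1, h2, h3⟩
        set g : V →ₗ[ℝ] ℝ :=
          { toFun := f
            map_add' := h1
            map_smul' := fun c x => by simp only [RingHom.id_apply, smul_eq_mul]; exact h2 c x }
        refine ⟨⟨g, hcont g h3⟩, h3, rfl⟩
    exact DFunLike.coe_injective.isEmbedding_induced.isCompact_iff.mpr (himg ▸ hKcomp)
  -- the eval functional
  have heval : ∀ x : V, ∃ l : WeakDual ℝ V →L[ℝ] ℝ, ∀ p : WeakDual ℝ V, l p = p x := by
    intro x
    refine ⟨⟨(topDualPairing ℝ V).flip x, WeakDual.eval_continuous x⟩, fun p => rfl⟩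
  -- extreme point attainment
  have hmain : ∀ x : V, ∃ p ∈ Set.extremePoints ℝ P, p x = q x := by
    intro x
    obtain ⟨p₀, hp₀P, hp₀x⟩ := hatt x
    obtain ⟨l, hl⟩ := heval x
    set F : Set (WeakDual ℝ V) := {p ∈ P | p x = q x} with hFdef
    have hFexp : IsExposed ℝ P F := by
      intro _
      refine ⟨l, ?_⟩
      ext p
      simp only [hFdef, mem_setOf_eq, hl]
      constructor
      · rintro ⟨hp, hpx⟩
        exact ⟨hp, fun p' hp' => by rw [hpx]; exact hp' x⟩
      · rintro ⟨hp, hub⟩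
        refine ⟨hp, le_antisymm (hp x) ?_⟩
        have := hub p₀ hp₀P
        rw [hp₀x] at this
        exact this
    have hFcl : IsClosed F :=
      hPcl.inter (isClosed_eq (WeakDual.eval_continuous x) continuous_const)
    have hFcomp : IsCompact F := hPcomp.of_isClosed_subset hFcl fun p hp => hp.1
    have hFne : F.Nonempty := ⟨p₀, hp₀P, hp₀x⟩
    obtain ⟨p, hp⟩ := hFcomp.extremePoints_nonempty hFne
    have hext : IsExtreme ℝ P F := hFexp.isExtreme
    exact ⟨p, hext.extremePoints_subset_extremePoints hp,
      (extremePoints_subset hp).2⟩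
  refine ⟨?_, ?_, ?_⟩
  · intro x
    obtain ⟨p, hpext, hpx⟩ := hmain x
    constructor
    · rintro r ⟨p', hp', rfl⟩
      exact (extremePoints_subset hp') x
    · intro b hb
      have : q x ∈ {r : ℝ | ∃ p ∈ Set.extremePoints ℝ P, r = p x} := ⟨p, hpext, hpx.symm⟩
      exact hb this
  · intro x
    obtain ⟨p, hpext, hpx⟩ := hmain x
    constructor
    · exact ⟨p, subset_closure hpext, hpx.symm⟩
    · rintro r ⟨p', hp', rfl⟩
      have : p' ∈ P := by
        have hsub : closure (Set.extremePoints ℝ P) ⊆ P :=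
          hPcl.closure_subset_iff.mpr extremePoints_subset
        exact hsub hp'
      exact this x
  · intro _ x
    obtain ⟨p, hpext, hpx⟩ := hmain x
    refine ⟨p, hpext, ?_⟩
    constructor
    · exact ⟨p, extremePoints_subset hpext, rfl⟩
    · rintro r ⟨p', hp', rfl⟩
      rw [hpx]
      exact hp' x
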